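/- Let f = {f_t}_{t≥1} be an anonymous age-based acknowledgment-based protocol for n players that is in equilibrium and has finite expected latency E[T_i | h_{i,0}, f] < ∞ for each player. Then there exists a finite positive integer τ* such that: (a) f_{τ*} = 1; (b) f_{τ*−1} < 1; and (c) there exist τ₁ < τ₂ < ⋯ < τ_{n−1} < τ* with f_{τ_j} < 1 for all j = 1, …, n−1. -/

import Mathlib

open scoped ENNReal

namespace Contention

/-- An acknowledgment-based protocol: maps a player's personal transmission history
(the list of her own past transmission indicators, oldest slot first) to the
probability of transmitting in the next slot. -/
abbrev Protocol : Type := List Bool → ℝ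

/-- A protocol is valid if it always prescribes a probability in `[0,1]`. -/
def ValidProtocol (f : Protocol) : Prop := ∀ h : List Bool, 0 ≤ f h ∧ f h ≤ 1

/-- A joint transmission history: the list of transmission vectors, oldest slot first. -/
abbrev Hist (n : ℕ) : Type := List (Fin n → Bool)

/-- The personal transmission history of player `i` extracted from a joint history. -/
def personal {n : ℕ} (h : Hist n) (i : Fin n) : List Bool := h.map fun v => v i

/-- Player `i` transmits alone (hence successfully) in the slot with transmission vector `v`. -/
def alone {n : ℕ} (v : Fin n → Bool) (i : Fin n) : Prop :=
  v i = true ∧ ∀ j : Fin n, j ≠ i → v j = false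

instance {n : ℕ} (v : Fin n → Bool) (i : Fin n) : Decidable (alone v i) := by
  unfold alone; infer_instance

/-- Player `i` is still pending after joint history `h` (she never transmitted alone). -/
def pending {n : ℕ} (h : Hist n) (i : Fin n) : Prop := ∀ v ∈ h, ¬ alone v i

instance {n : ℕ} (h : Hist n) (i : Fin n) : Decidable (pending h i) := by
  unfold pending; infer_instance

/-- Probability that the next slot has transmission vector `v`, given joint history `h`:
each pending player transmits independently with the probability her protocol assigns to
her personal history, and players that already succeeded stay quiet. -/
noncomputable def stepProb {n : ℕ} (F : Fin n → Protocol) (h : Hist n) (v : Fin n → Bool) : ℝ :=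
  ∏ i : Fin n,
    if pending h i then
      (if v i = true then F i (personal h i) else 1 - F i (personal h i))
    else
      (if v i = true then 0 else 1)

/-- Probability that, starting after joint history `h`, the next `e.length` slots produce
exactly the extension `e`. -/
noncomputable def contProb {n : ℕ} (F : Fin n → Protocol) (h e : Hist n) : ℝ :=
  ∏ t ∈ Finset.range e.length, stepProb F (h ++ e.take t) (e.getD t fun _ => false)

/-- Probability that the first `h.length` slots produce exactly the joint history `h`. -/
noncomputable def histProb {n : ℕ} (F : Fin n → Protocol) (h : Hist n) : ℝ := contProb F [] h

/-- Conditional probability, given joint history `h`, that player `i` is still pending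
after `s` further slots. -/
noncomputable def condPendProb {n : ℕ} (F : Fin n → Protocol) (h : Hist n) (i : Fin n)
    (s : ℕ) : ℝ :=
  ∑ e : Fin s → Fin n → Bool,
    if pending (h ++ List.ofFn e) i then contProb F h (List.ofFn e) else 0

/-- Conditional expected latency `E[Tᵢ | h]` of player `i` given joint history `h`
(`Tᵢ` is the first slot in which `i` transmits alone), computed via
`E[Tᵢ | h] = ∑_{s ≥ 0} Pr(Tᵢ > s | h)`; for `s ≤ h.length` the event `Tᵢ > s` is
determined by `h`, and for larger `s` its probability is `condPendProb`. -/
noncomputable def condLatency {n : ℕ} (F : Fin n → Protocol) (h : Hist n) (i : Fin n) : ℝ≥0∞ :=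
  ∑' s : ℕ,
    if s ≤ h.length then (if pending (h.take s) i then 1 else 0)
    else ENNReal.ofReal (condPendProb F h i (s - h.length))

/-- Conditional expected number of further slots until player `i` succeeds, given joint
history `h` (the slot of the successful transmission itself is counted). -/
noncomputable def condRemaining {n : ℕ} (F : Fin n → Protocol) (h : Hist n) (i : Fin n) : ℝ≥0∞ :=
  ∑' s : ℕ, ENNReal.ofReal (condPendProb F h i s)

/-- A profile of protocols is in equilibrium if after no joint history (arising with
positive probability) can a player strictly decrease her conditional expected latency
by unilaterally switching to another (valid) protocol. -/
def IsEquilibrium {n : ℕ} (F : Fin n → Protocol) : Prop :=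
  ∀ i : Fin n, ∀ h : Hist n, 0 < histProb F h →
    ∀ g : Protocol, ValidProtocol g →
      condLatency F h i ≤ condLatency (Function.update F i g) h i

end Contention

namespace Contention

/-- An age-based protocol: the transmission probability in slot `t` (that is, after a
personal history of length `t − 1`) is `p t`, depending only on the time `t ≥ 1`. -/
def ageProtocol (p : ℕ → ℝ) : Protocol := fun h => p (h.length + 1)

end Contention

namespace Contention


variable {n : ℕ}

lemma pending_append {a b : Hist n} {i : Fin n} (h : pending (a ++ b) i) : pending a i :=
  fun v hv => h v (List.mem_append_left _ hv)

lemma pending_take {h : Hist n} {i : Fin n} (hp : pending h i) (m : ℕ) :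
    pending (h.take m) i := fun v hv => hp v (List.take_subset _ _ hv)

lemma alone_eq {v : Fin n → Bool} {i j : Fin n} (hi : alone v i) (hj : alone v j) : i = j := by
  by_contra hne
  exact absurd hi.1 (by rw [hj.2 i hne]; simp)

lemma stepProb_nonneg {F : Fin n → Protocol} (hF : ∀ i h, 0 ≤ F i h ∧ F i h ≤ 1)
    (h : Hist n) (v : Fin n → Bool) : 0 ≤ stepProb F h v := by
  refine Finset.prod_nonneg fun i _ => ?_
  rcases hF i (personal h i) with ⟨h0, h1⟩
  split_ifs <;> linarith

lemma stepProb_sum (F : Fin n → Protocol) (h : Hist n) :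
    ∑ v : Fin n → Bool, stepProb F h v = 1 := by
  unfold stepProb
  rw [← Fintype.piFinset_univ,
    ← Finset.prod_univ_sum (fun _ : Fin n => (Finset.univ : Finset Bool))
      (fun i b => if pending h i then (if b = true then F i (personal h i)
        else 1 - F i (personal h i)) else (if b = true then 0 else 1))]
  rw [Finset.prod_eq_one]
  intro i _
  by_cases hp : pending h i <;> simp [hp, Fintype.sum_bool]

lemma contProb_nil (F : Fin n → Protocol) (h : Hist n) : contProb F h [] = 1 := by
  simp [contProb]

lemma contProb_cons (F : Fin n → Protocol) (h : Hist n) (v : Fin n → Bool) (l : Hist n) :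
    contProb F h (v :: l) = stepProb F h v * contProb F (h ++ [v]) l := by
  unfold contProb
  rw [List.length_cons, Finset.prod_range_succ', mul_comm]
  simp only [List.take_succ_cons, List.getD_cons_succ, List.getD_cons_zero, List.take_zero,
    List.append_nil, List.append_assoc, List.singleton_append]

lemma contProb_nonneg {F : Fin n → Protocol} (hF : ∀ i h, 0 ≤ F i h ∧ F i h ≤ 1)
    (h e : Hist n) : 0 ≤ contProb F h e :=
  Finset.prod_nonneg fun t _ => stepProb_nonneg hF _ _

lemma contProb_append (F : Fin n → Protocol) (h a b : Hist n) :
    contProb F h (a ++ b) = contProb F h a * contProb F (h ++ a) b := by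
  induction a generalizing h with
  | nil => simp [contProb_nil]
  | cons v a ih =>
      rw [List.cons_append, contProb_cons, contProb_cons, ih, mul_assoc, ← List.append_cons]

/-- Splitting a sum over tuples of length `s+1` into first coordinate and rest. -/
lemma sum_ofFn_succ {s : ℕ} (A : Hist n → ℝ) :
    ∑ e : Fin (s + 1) → Fin n → Bool, A (List.ofFn e)
      = ∑ v : Fin n → Bool, ∑ e : Fin s → Fin n → Bool, A (v :: List.ofFn e) := by
  calc ∑ e : Fin (s + 1) → Fin n → Bool, A (List.ofFn e)
      = ∑ q : (Fin n → Bool) × (Fin s → Fin n → Bool),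
          A (List.ofFn ((Fin.consEquiv (fun _ : Fin (s + 1) => Fin n → Bool)) q)) :=
        (Equiv.sum_comp _ _).symm
    _ = ∑ q : (Fin n → Bool) × (Fin s → Fin n → Bool), A (q.1 :: List.ofFn q.2) := by
        refine Finset.sum_congr rfl fun q _ => ?_
        rw [List.ofFn_succ]
        simp [Fin.consEquiv]
    _ = ∑ v : Fin n → Bool, ∑ e : Fin s → Fin n → Bool, A (v :: List.ofFn e) :=
        Fintype.sum_prod_type (f := fun q => A (q.1 :: List.ofFn q.2))

lemma total_one {F : Fin n → Protocol} (s : ℕ) (h : Hist n) :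
    ∑ e : Fin s → Fin n → Bool, contProb F h (List.ofFn e) = 1 := by
  induction s generalizing h with
  | zero => simp [contProb_nil]
  | succ s ih =>
      rw [sum_ofFn_succ (fun l => contProb F h l)]
      calc ∑ v : Fin n → Bool, ∑ e : Fin s → Fin n → Bool, contProb F h (v :: List.ofFn e)
          = ∑ v : Fin n → Bool, stepProb F h v := by
            refine Finset.sum_congr rfl fun v _ => ?_
            simp only [contProb_cons, ← Finset.mul_sum, ih (h ++ [v]), mul_one]
        _ = 1 := stepProb_sum F h


variable {n : ℕ}

lemma cpp_nonneg {F : Fin n → Protocol} (hF : ∀ i h, 0 ≤ F i h ∧ F i h ≤ 1)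
    (h : Hist n) (i : Fin n) (s : ℕ) : 0 ≤ condPendProb F h i s := by
  refine Finset.sum_nonneg fun e _ => ?_
  split_ifs with hp
  · exact contProb_nonneg hF _ _
  · exact le_refl 0

/-- Number of players still pending after history `h`. -/
def pcount (h : Hist n) : ℕ := (Finset.univ.filter (fun i => pending h i)).card

lemma pcount_nil : pcount ([] : Hist n) = n := by
  simp [pcount, pending]

lemma pending_append_singleton {l : Hist n} {v : Fin n → Bool} {i : Fin n} :
    pending (l ++ [v]) i ↔ pending l i ∧ ¬ alone v i := by
  constructor
  · intro hp
    exact ⟨pending_append hp, hp v (List.mem_append_right _ (List.mem_singleton_self v))⟩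
  · rintro ⟨h1, h2⟩ w hw
    rcases List.mem_append.1 hw with hw | hw
    · exact h1 w hw
    · rwa [List.mem_singleton.1 hw]

lemma pcount_append_singleton (l : Hist n) (v : Fin n → Bool) :
    pcount l ≤ pcount (l ++ [v]) + 1 := by
  have hsub : (Finset.univ.filter (fun i => pending l i)) ⊆
      (Finset.univ.filter (fun i => pending (l ++ [v]) i)) ∪
      (Finset.univ.filter (fun i => alone v i)) := by
    intro i hi
    rw [Finset.mem_filter] at hi
    by_cases ha : alone v i
    · exact Finset.mem_union_right _ (by simp [ha])
    · exact Finset.mem_union_left _ (by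
        simp only [Finset.mem_filter, Finset.mem_univ, true_and]
        exact pending_append_singleton.2 ⟨hi.2, ha⟩)
  have hone : (Finset.univ.filter (fun i => alone v i)).card ≤ 1 := by
    refine Finset.card_le_one.2 fun a ha b hb => ?_
    rw [Finset.mem_filter] at ha hb
    exact alone_eq ha.2 hb.2
  calc pcount l ≤ ((Finset.univ.filter (fun i => pending (l ++ [v]) i)) ∪
        (Finset.univ.filter (fun i => alone v i))).card := Finset.card_le_card hsub
    _ ≤ pcount (l ++ [v]) + 1 := le_trans (Finset.card_union_le _ _) (by
        exact Nat.add_le_add_left hone _)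

lemma pcount_append_singleton' (l : Hist n) (v : Fin n → Bool) :
    pcount l - 1 ≤ pcount (l ++ [v]) := by
  have := pcount_append_singleton l v
  omega

lemma histProb_take_pos {F : Fin n → Protocol} (hF : ∀ i h, 0 ≤ F i h ∧ F i h ≤ 1)
    {l : Hist n} (hpos : 0 < histProb F l) (m : ℕ) : 0 < histProb F (l.take m) := by
  have hsplit := contProb_append F [] (l.take m) (l.drop m)
  rw [List.take_append_drop, List.nil_append] at hsplit
  unfold histProb at *
  rw [hsplit] at hpos
  have h1 := contProb_nonneg hF ([] : Hist n) (l.take m)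
  rcases lt_or_eq_of_le h1 with h | h
  · exact h
  · rw [← h, zero_mul] at hpos
    exact absurd hpos (lt_irrefl 0)

/-- There is a prefix with exactly one pending player. -/
lemma exists_prefix_pcount_one {l : Hist n} (hn : 2 ≤ n) (h0 : pcount l = 0) :
    ∃ m ≤ l.length, pcount (l.take m) = 1 := by
  have hex : ∃ m, pcount (l.take m) ≤ 1 := ⟨l.length, by rw [List.take_length, h0]; omega⟩
  classical
  have hle : pcount (l.take (Nat.find hex)) ≤ 1 := Nat.find_spec hex
  have hmpos : Nat.find hex ≠ 0 := by
    intro h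
    rw [h] at hle
    simp only [List.take_zero] at hle
    rw [pcount_nil] at hle
    omega
  obtain ⟨m', hm'⟩ : ∃ m', Nat.find hex = m' + 1 := ⟨Nat.find hex - 1, by omega⟩
  rw [hm'] at hle
  have hprev : ¬ pcount (l.take m') ≤ 1 := Nat.find_min hex (by omega)
  have hm'lt : m' < l.length := by
    by_contra hcon
    push_neg at hcon
    rw [List.take_of_length_le hcon, h0] at hprev
    omega
  refine ⟨m' + 1, by omega, ?_⟩
  have htake : l.take (m' + 1) = l.take m' ++ [l[m']] := by
    rw [List.take_succ, List.getElem?_eq_getElem hm'lt]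
    rfl
  have := pcount_append_singleton' (l.take m') l[m']
  rw [← htake] at this
  omega


variable {n : ℕ}

lemma valid_age {p : ℕ → ℝ} (hp : ∀ t : ℕ, 1 ≤ t → 0 ≤ p t ∧ p t ≤ 1) :
    ∀ (i : Fin n) (h : List Bool), 0 ≤ (fun _ : Fin n => ageProtocol p) i h ∧
      (fun _ : Fin n => ageProtocol p) i h ≤ 1 := by
  intro i h
  exact hp (h.length + 1) (by omega)

/-- Key equilibrium consequence: if at a positive-probability history exactly player `i`
is pending, then the protocol prescribes certain transmission in the next slot. -/
lemma key_deadline {p : ℕ → ℝ} (hp : ∀ t : ℕ, 1 ≤ t → 0 ≤ p t ∧ p t ≤ 1)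
    (hEq : IsEquilibrium (fun _ : Fin n => ageProtocol p))
    {h : Hist n} {i : Fin n} (hpos : 0 < histProb (fun _ : Fin n => ageProtocol p) h)
    (hpend : pending h i) (hoth : ∀ j : Fin n, j ≠ i → ¬ pending h j) :
    p (h.length + 1) = 1 := by
  classical
  set F : Fin n → Protocol := fun _ : Fin n => ageProtocol p with hF
  set g : Protocol := fun _ => 1 with hg
  have hgv : ValidProtocol g := fun _ => ⟨zero_le_one, le_refl 1⟩
  set F' := Function.update F i g with hF'
  have hle : condLatency F h i ≤ condLatency F' h i := hEq i h hpos g hgv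
  -- the deviation succeeds in one slot
  have cpp' : ∀ m : ℕ, condPendProb F' h i (m + 1) = 0 := by
    intro m
    unfold condPendProb
    refine Finset.sum_eq_zero fun e _ => ?_
    split_ifs with hpe
    · rw [List.ofFn_succ, contProb_cons]
      suffices hs : stepProb F' h (e 0) = 0 by rw [hs, zero_mul]
      by_cases hv : e 0 i = true
      · by_cases hall : ∀ j : Fin n, j ≠ i → e 0 j = false
        · exfalso
          refine hpe (e 0) ?_ ⟨hv, hall⟩
          refine List.mem_append_right _ ?_
          rw [List.ofFn_succ]
          exact List.mem_cons_self
        · push_neg at hall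
          obtain ⟨j, hji, hj⟩ := hall
          unfold stepProb
          refine Finset.prod_eq_zero (Finset.mem_univ j) ?_
          have hnp : ¬ pending h j := hoth j hji
          rw [if_neg hnp, if_pos (by simpa using hj)]
      · unfold stepProb
        refine Finset.prod_eq_zero (Finset.mem_univ i) ?_
        rw [if_pos hpend, if_neg hv]
        have : F' i = g := Function.update_self i g F
        rw [this]
        norm_num
    · rfl
  -- compute the deviation's latency
  set A : ℝ≥0∞ := ∑ s ∈ Finset.range (h.length + 1),
    (if pending (h.take s) i then (1 : ℝ≥0∞) else 0) with hA
  have hlat' : condLatency F' h i = A := by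
    unfold condLatency
    rw [tsum_eq_sum (s := Finset.range (h.length + 1)) ?_]
    · refine Finset.sum_congr rfl fun s hs => ?_
      rw [Finset.mem_range] at hs
      rw [if_pos (by omega)]
    · intro s hs
      rw [Finset.mem_range] at hs
      push_neg at hs
      rw [if_neg (by omega)]
      obtain ⟨m, hm⟩ : ∃ m, s - h.length = m + 1 := ⟨s - h.length - 1, by omega⟩
      rw [hm, cpp' m, ENNReal.ofReal_zero]
  have hAfin : A ≠ ⊤ := by
    have : A ≤ ∑ _s ∈ Finset.range (h.length + 1), (1 : ℝ≥0∞) := by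
      refine Finset.sum_le_sum fun s _ => ?_
      split_ifs
      · exact le_refl 1
      · exact zero_le_one
    have h2 : (∑ _s ∈ Finset.range (h.length + 1), (1 : ℝ≥0∞)) = ((h.length + 1 : ℕ) : ℝ≥0∞) := by
      simp
    rw [h2] at this
    exact ne_top_of_le_ne_top (ENNReal.natCast_ne_top _) this
  -- lower bound on the actual latency
  have hlow : A + ENNReal.ofReal (condPendProb F h i 1) ≤ condLatency F h i := by
    unfold condLatency
    have hsum : ∑ s ∈ Finset.range (h.length + 2),
        (if s ≤ h.length then (if pending (h.take s) i then (1 : ℝ≥0∞) else 0)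
          else ENNReal.ofReal (condPendProb F h i (s - h.length)))
        = A + ENNReal.ofReal (condPendProb F h i 1) := by
      rw [Finset.sum_range_succ]
      congr 1
      · refine Finset.sum_congr rfl fun s hs => ?_
        rw [Finset.mem_range] at hs
        rw [if_pos (by omega)]
      · rw [if_neg (by omega)]
        have h3 : h.length + 1 - h.length = 1 := by omega
        rw [h3]
    rw [← hsum]
    exact ENNReal.sum_le_tsum _
  -- conclude that the one-step pending probability vanishes
  have hzero : condPendProb F h i 1 = 0 := by
    have hch : A + ENNReal.ofReal (condPendProb F h i 1) ≤ A := by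
      calc A + ENNReal.ofReal (condPendProb F h i 1) ≤ condLatency F h i := hlow
        _ ≤ condLatency F' h i := hle
        _ = A := hlat'
    by_contra hne
    have hpos' : ENNReal.ofReal (condPendProb F h i 1) ≠ 0 := by
      intro hc
      rw [ENNReal.ofReal_eq_zero] at hc
      exact hne (le_antisymm hc (cpp_nonneg (valid_age hp) h i 1))
    exact absurd (lt_of_lt_of_le (ENNReal.lt_add_right hAfin hpos') hch) (lt_irrefl A)
  -- extract the all-quiet term
  have hterm : stepProb F h (fun _ => false) = 0 := by
    have hnn : ∀ e ∈ (Finset.univ : Finset (Fin 1 → Fin n → Bool)),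
        0 ≤ if pending (h ++ List.ofFn e) i then contProb F h (List.ofFn e) else 0 := by
      intro e _
      split_ifs
      · exact contProb_nonneg (valid_age hp) _ _
      · exact le_refl 0
    have := (Finset.sum_eq_zero_iff_of_nonneg hnn).1 hzero
      (fun _ _ => false) (Finset.mem_univ _)
    have hofn : List.ofFn (fun _ : Fin 1 => (fun _ : Fin n => false)) =
        [fun _ : Fin n => false] := by
      simp [List.ofFn_succ]
    rw [hofn] at this
    have hpend' : pending (h ++ [fun _ : Fin n => false]) i := by
      refine pending_append_singleton.2 ⟨hpend, ?_⟩
      intro ha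
      exact absurd ha.1 (by simp)
    rw [if_pos hpend', contProb_cons, contProb_nil, mul_one] at this
    exact this
  -- compute the all-quiet step probability
  unfold stepProb at hterm
  have heval : ∏ j : Fin n,
      (if pending h j then
        (if (fun _ : Fin n => false) j = true then F j (personal h j)
          else 1 - F j (personal h j))
      else (if (fun _ : Fin n => false) j = true then 0 else 1))
      = 1 - p (h.length + 1) := by
    rw [Finset.prod_eq_single i]
    · rw [if_pos hpend, if_neg (by simp)]
      have : F i (personal h i) = p ((personal h i).length + 1) := rfl
      rw [this]
      have : (personal h i).length = h.length := by simp [personal]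
      rw [this]
    · intro j _ hji
      rw [if_neg (hoth j hji), if_neg (by simp)]
    · intro hcon
      exact absurd (Finset.mem_univ i) hcon
  rw [heval] at hterm
  linarith


variable {n : ℕ}

/-- From finite expected latencies: some history of full success has positive probability. -/
lemma exists_success_history {p : ℕ → ℝ} (hp : ∀ t : ℕ, 1 ≤ t → 0 ≤ p t ∧ p t ≤ 1)
    (hn : 2 ≤ n)
    (hFin : ∀ i : Fin n, condLatency (fun _ : Fin n => ageProtocol p) [] i < ⊤) :
    ∃ l : Hist n, 0 < histProb (fun _ : Fin n => ageProtocol p) l ∧ pcount l = 0 := by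
  classical
  set F : Fin n → Protocol := fun _ : Fin n => ageProtocol p with hFdef
  have aux0 : ∀ f : ℕ → ℝ≥0∞, (∑' s : ℕ, f s) = f 0 + ∑' s : ℕ, f (s + 1) :=
    fun f => tsum_eq_zero_add' ENNReal.summable
  have aux1 : ∀ f : ℕ → ℝ≥0∞, (∑' s : ℕ, f (s + 1)) ≤ ∑' s : ℕ, f s :=
    fun f => ENNReal.tsum_comp_le_tsum_of_injective (add_left_injective 1) f
  have htsum : ∀ i : Fin n,
      (∑' s : ℕ, ENNReal.ofReal (condPendProb F [] i s)) ≠ ⊤ := by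
    intro i
    set D : ℕ → ℝ≥0∞ := fun u : ℕ => if u ≤ ([] : Hist n).length
        then (if pending (([] : Hist n).take u) i then 1 else 0)
        else ENNReal.ofReal (condPendProb F [] i (u - ([] : Hist n).length)) with hD
    have hcl : condLatency F [] i = ∑' s : ℕ, D s := rfl
    have hDs : ∀ s : ℕ, (fun u : ℕ => ENNReal.ofReal (condPendProb F [] i u)) (s + 1)
        = D (s + 1) := by
      intro s
      rw [hD]
      simp
    rw [aux0 (fun u : ℕ => ENNReal.ofReal (condPendProb F [] i u))]
    refine ENNReal.add_ne_top.2 ⟨ENNReal.ofReal_ne_top, ?_⟩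
    have hle : (∑' s : ℕ, (fun u : ℕ => ENNReal.ofReal (condPendProb F [] i u)) (s + 1))
        ≤ condLatency F [] i := by
      rw [tsum_congr hDs, hcl]
      exact aux1 D
    exact ne_top_of_le_ne_top (hFin i).ne hle
  have hto : ∀ i : Fin n,
      Filter.Tendsto (fun s => ENNReal.ofReal (condPendProb F [] i s))
        Filter.atTop (nhds 0) :=
    fun i => ENNReal.tendsto_atTop_zero_of_tsum_ne_top (htsum i)
  have hnpos : (0 : ℝ) < 1 / n := by positivity
  have hev : ∀ᶠ s in Filter.atTop, ∀ i : Fin n,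
      ENNReal.ofReal (condPendProb F [] i s) < ENNReal.ofReal (1 / n) := by
    rw [Filter.eventually_all]
    intro i
    exact (hto i).eventually_lt_const (by simpa using ENNReal.ofReal_pos.2 hnpos)
  obtain ⟨s, hs⟩ := hev.exists
  have hsmall : ∀ i : Fin n, condPendProb F [] i s < 1 / n := by
    intro i
    exact (ENNReal.ofReal_lt_ofReal_iff hnpos).1 (hs i)
  -- expected number of pending players after s slots
  have hcount : ∑ e : Fin s → Fin n → Bool,
      contProb F [] (List.ofFn e) * (pcount (List.ofFn e) : ℝ)
      = ∑ i : Fin n, condPendProb F [] i s := by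
    unfold condPendProb
    rw [Finset.sum_comm]
    refine Finset.sum_congr rfl fun e _ => ?_
    have h1 : ∀ i : Fin n,
        (if pending (([] : Hist n) ++ List.ofFn e) i then contProb F [] (List.ofFn e) else 0)
        = contProb F [] (List.ofFn e) * (if pending (List.ofFn e) i then (1 : ℝ) else 0) := by
      intro i
      rw [List.nil_append]
      split_ifs <;> ring
    rw [Finset.sum_congr rfl fun i _ => h1 i, ← Finset.mul_sum]
    congr 1
    rw [Finset.sum_boole]
    rfl
  have htot : ∑ e : Fin s → Fin n → Bool, contProb F [] (List.ofFn e) = 1 := total_one s []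
  have hnn0 : (0 : ℝ) < n := by positivity
  have hlt1 : ∑ i : Fin n, condPendProb F [] i s < 1 := by
    have : ∑ i : Fin n, condPendProb F [] i s < ∑ _i : Fin n, (1 / n : ℝ) :=
      Finset.sum_lt_sum_of_nonempty (Finset.univ_nonempty_iff.2
        ⟨⟨0, by omega⟩⟩) fun i _ => hsmall i
    rw [Finset.sum_const, Finset.card_univ, Fintype.card_fin, nsmul_eq_mul] at this
    rw [mul_one_div, div_self (ne_of_gt hnn0)] at this
    exact this
  by_contra hcon
  push_neg at hcon
  have hbound : ∀ e : Fin s → Fin n → Bool,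
      contProb F [] (List.ofFn e) ≤ contProb F [] (List.ofFn e) * (pcount (List.ofFn e) : ℝ) := by
    intro e
    rcases lt_or_eq_of_le (contProb_nonneg (valid_age hp) [] (List.ofFn e)) with hpos | heq
    · have hne : pcount (List.ofFn e) ≠ 0 := hcon (List.ofFn e) hpos
      have : (1 : ℝ) ≤ (pcount (List.ofFn e) : ℝ) := by
        exact_mod_cast Nat.one_le_iff_ne_zero.2 hne
      nlinarith
    · rw [← heq, zero_mul]
  have : (1 : ℝ) < 1 := by
    calc (1 : ℝ) = ∑ e : Fin s → Fin n → Bool, contProb F [] (List.ofFn e) := htot.symm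
      _ ≤ ∑ e : Fin s → Fin n → Bool,
            contProb F [] (List.ofFn e) * (pcount (List.ofFn e) : ℝ) :=
          Finset.sum_le_sum fun e _ => hbound e
      _ = ∑ i : Fin n, condPendProb F [] i s := hcount
      _ < 1 := hlt1
  exact absurd this (lt_irrefl 1)


variable {n : ℕ}

lemma step_factor_ne {F : Fin n → Protocol} {h : Hist n}
    (hpos : 0 < histProb F h) {k : ℕ} (hk : k < h.length) :
    stepProb F (h.take k) (h.getD k (fun _ => false)) ≠ 0 := by
  unfold histProb contProb at hpos
  simp only [List.nil_append] at hpos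
  exact Finset.prod_ne_zero_iff.1 (ne_of_gt hpos) k (Finset.mem_range.2 hk)

lemma factor_ne {F : Fin n → Protocol} {h' : Hist n} {v : Fin n → Bool}
    (hne : stepProb F h' v ≠ 0) (i : Fin n) :
    (if pending h' i then
      (if v i = true then F i (personal h' i) else 1 - F i (personal h' i))
    else (if v i = true then 0 else 1)) ≠ 0 := by
  unfold stepProb at hne
  exact Finset.prod_ne_zero_iff.1 hne i (Finset.mem_univ i)


/-- If an anonymous age-based acknowledgment-based protocol `p` for
`n ≥ 2` players is in equilibrium and gives every player finite expected latency, then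
there is a finite positive integer `τ` with (a) `p τ = 1`, (b) `p (τ − 1) < 1`, and
(c) there are slots `τ₁ < ⋯ < τ_{n−1} < τ` with `p τⱼ < 1` for all `j`. -/
theorem age_based_equilibrium_blocking_slot :
    ∀ (n : ℕ) (p : ℕ → ℝ), 2 ≤ n →
      (∀ t : ℕ, 1 ≤ t → 0 ≤ p t ∧ p t ≤ 1) →
      IsEquilibrium (fun _ : Fin n => ageProtocol p) →
      (∀ i : Fin n, condLatency (fun _ : Fin n => ageProtocol p) [] i < ⊤) →
      ∃ τ : ℕ, 2 ≤ τ ∧ p τ = 1 ∧ p (τ - 1) < 1 ∧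
        ∃ ts : Fin (n - 1) → ℕ, StrictMono ts ∧
          ∀ j : Fin (n - 1), 1 ≤ ts j ∧ ts j < τ ∧ p (ts j) < 1 := by
  intro n p hn hp hEq hFin
  classical
  set F : Fin n → Protocol := fun _ : Fin n => ageProtocol p with hFdef
  -- a positive-probability history where everyone has succeeded
  obtain ⟨l, hlpos, hl0⟩ := exists_success_history hp hn hFin
  -- a positive-probability prefix with exactly one pending player
  obtain ⟨m, hmle, hm1⟩ := exists_prefix_pcount_one hn hl0
  set h : Hist n := l.take m with hhdef
  have hpos : 0 < histProb F h := histProb_take_pos (valid_age hp) hlpos m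
  obtain ⟨i, hi⟩ := Finset.card_eq_one.1 hm1
  have hpend : pending h i := by
    have : i ∈ Finset.univ.filter (fun j => pending h j) := by rw [hi]; exact Finset.mem_singleton_self i
    exact (Finset.mem_filter.1 this).2
  have hoth : ∀ j : Fin n, j ≠ i → ¬ pending h j := by
    intro j hj hpj
    have : j ∈ Finset.univ.filter (fun j => pending h j) := by
      simp [hpj]
    rw [hi, Finset.mem_singleton] at this
    exact hj this
  -- the deadline
  have hdead : p (h.length + 1) = 1 := key_deadline hp hEq hpos hpend hoth
  -- the successful players and their success slots
  set S : Finset (Fin n) := Finset.univ.filter (fun j => ¬ pending h j) with hS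
  have hScard : S.card = n - 1 := by
    have heq := Finset.card_filter_add_card_filter_not
      (s := (Finset.univ : Finset (Fin n))) (p := fun j => pending h j)
    have hm1' : (Finset.filter (fun j => pending h j) Finset.univ).card = 1 := hm1
    have hcu : (Finset.univ : Finset (Fin n)).card = n := by
      rw [Finset.card_univ, Fintype.card_fin]
    rw [hm1', hcu] at heq
    rw [hS]
    omega
  -- success slots with transmission probability < 1
  have hsel : ∀ j ∈ S, ∃ k : ℕ, k < h.length ∧
      alone (h.getD k (fun _ => false)) j ∧ p (k + 1) < 1 := by
    intro j hj
    have hnp : ¬ pending h j := (Finset.mem_filter.1 hj).2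
    have hji : j ≠ i := by
      intro hcon
      exact hnp (hcon ▸ hpend)
    unfold pending at hnp
    push_neg at hnp
    obtain ⟨v, hvmem, hva⟩ := hnp
    obtain ⟨k, hk, hvk⟩ := List.getElem_of_mem hvmem
    have hgd : h.getD k (fun _ => false) = v := by
      rw [List.getD_eq_getElem _ _ hk, hvk]
    refine ⟨k, hk, by rw [hgd]; exact hva, ?_⟩
    -- the pending player i stays quiet at slot k with positive probability
    have hne := factor_ne (step_factor_ne hpos hk) i
    have hvi : (h.getD k fun _ => false) i = false := by
      rw [hgd]
      exact hva.2 i (fun hcon => hji (hcon.symm ▸ rfl))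
    rw [if_pos (pending_take hpend k), hvi] at hne
    simp only [Bool.false_eq_true, if_false] at hne
    have hlen : (personal (h.take k) i).length = k := by
      simp [personal, List.length_take]
      omega
    have hFi : F i (personal (h.take k) i) = p (k + 1) := by
      show p ((personal (h.take k) i).length + 1) = p (k + 1)
      rw [hlen]
    rw [hFi] at hne
    have hle1 : p (k + 1) ≤ 1 := (hp (k + 1) (by omega)).2
    rcases lt_or_eq_of_le hle1 with hlt | heq1
    · exact hlt
    · exact absurd (by rw [heq1]; ring) hne
  -- choose the slots
  set f : Fin n → ℕ := fun j =>
    if hj : j ∈ S then (Classical.choose (hsel j hj)) + 1 else 0 with hf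
  have hfspec : ∀ j (hj : j ∈ S), (f j) - 1 < h.length ∧
      alone (h.getD ((f j) - 1) (fun _ => false)) j ∧ p (f j) < 1 ∧ 1 ≤ f j := by
    intro j hj
    have := Classical.choose_spec (hsel j hj)
    rw [hf]
    simp only [dif_pos hj, Nat.add_sub_cancel]
    exact ⟨this.1, this.2.1, this.2.2, by omega⟩
  have hinj : Set.InjOn f S := by
    intro a ha b hb hab
    have hA := (hfspec a ha).2.1
    have hB := (hfspec b hb).2.1
    rw [hab] at hA
    exact alone_eq hA hB
  set T : Finset ℕ := S.image f with hT
  have hTcard : T.card = n - 1 := by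
    rw [hT, Finset.card_image_of_injOn hinj, hScard]
  have hTmem : ∀ x ∈ T, 1 ≤ x ∧ x ≤ h.length ∧ p x < 1 := by
    intro x hx
    obtain ⟨j, hj, rfl⟩ := Finset.mem_image.1 hx
    obtain ⟨h1, _, h3, h4⟩ := hfspec j hj
    exact ⟨h4, by omega, h3⟩
  have hTne : T.Nonempty := Finset.card_pos.1 (by omega)
  set M : ℕ := T.max' hTne with hM
  have hMmem : M ∈ T := T.max'_mem hTne
  have hMle : M ≤ h.length := (hTmem M hMmem).2.1
  have hM1 : 1 ≤ M := (hTmem M hMmem).1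
  -- the deadline slot
  have hQ : ∃ u : ℕ, M < u ∧ p u = 1 := ⟨h.length + 1, by omega, hdead⟩
  set τ : ℕ := Nat.find hQ with hτ
  have hτspec : M < τ ∧ p τ = 1 := Nat.find_spec hQ
  have hτmin : ∀ u < τ, ¬ (M < u ∧ p u = 1) := fun u hu => Nat.find_min hQ hu
  refine ⟨τ, by omega, hτspec.2, ?_, ?_⟩
  · -- p (τ - 1) < 1
    rcases Nat.lt_or_ge M (τ - 1) with hlt | hge
    · have hne1 : ¬ (M < τ - 1 ∧ p (τ - 1) = 1) := hτmin (τ - 1) (by omega)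
      push_neg at hne1
      have := hne1 hlt
      have hle1 : p (τ - 1) ≤ 1 := (hp (τ - 1) (by omega)).2
      exact lt_of_le_of_ne hle1 this
    · have hMeq : τ - 1 = M := by omega
      rw [hMeq]
      exact (hTmem M hMmem).2.2
  · -- the n - 1 earlier slots
    refine ⟨fun j => ((T.orderIsoOfFin hTcard j : ℕ)), ?_, ?_⟩
    · intro a b hab
      exact Subtype.coe_lt_coe.2 ((T.orderIsoOfFin hTcard).strictMono hab)
    · intro j
      have hmem : ((T.orderIsoOfFin hTcard j : ℕ)) ∈ T := (T.orderIsoOfFin hTcard j).2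
      obtain ⟨h1, h2, h3⟩ := hTmem _ hmem
      refine ⟨h1, ?_, h3⟩
      have hle2 : ((T.orderIsoOfFin hTcard j : ℕ)) ≤ M := T.le_max' _ hmem
      show ((T.orderIsoOfFin hTcard j : ℕ)) < τ
      omega

end Contention
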